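/- Let d≥1, let A,B,C:ℝ→M_d(ℝ) be continuous with A(s) and C(s) symmetric for every s, and let (Y,N):ℝ→M_d(ℂ)×M_d(ℂ) solve Ẏ=B(s)Y+C(s)N, Ṅ=−A(s)Y−B(s)ᵀN with Y(0)=I and N(0)=M₀, where M₀ is symmetric, Im M₀ is positive semidefinite, the set of v∈ℂ^d with v*·(Im M₀)·v=0 equals ℂw₀ for a fixed nonzero real vector w₀∈ℝ^d, M₀w₀ is real, and Y(s)w₀≠0 for all s (so that Y(s) is invertible for all s and w(s):=Y(s)w₀ is a nonvanishing real vector). Then, setting M(s)=N(s)Y(s)⁻¹, for every s∈ℝ and every nonzero y∈ℂ^d that is Hermitian-orthogonal to w(s), one has y*·Im(M(s))·y>0; that is, Im M(s) is positive definite on the orthogonal complement of w(s). -/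

import Mathlib

open Matrix
open scoped BigOperators

private lemma aux_const {f : ℝ → ℂ} (h : ∀ s, HasDerivAt f 0 s) (s : ℝ) : f s = f 0 := by
  refine is_const_of_fderiv_eq_zero (𝕜 := ℝ) (fun x => (h x).differentiableAt) (fun x => ?_) s 0
  have h1 := (h x).hasFDerivAt
  have h2 : (ContinuousLinearMap.toSpanSingleton ℝ (0 : ℂ)) = 0 := by ext t; simp
  rw [h2] at h1
  exact h1.fderiv

private lemma entry_deriv_mulT {d : ℕ} (P Q : ℝ → Matrix (Fin d) (Fin d) ℂ)
    (P' Q' : Matrix (Fin d) (Fin d) ℂ) (s : ℝ)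
    (hP : ∀ i j, HasDerivAt (fun t => P t i j) (P' i j) s)
    (hQ : ∀ i j, HasDerivAt (fun t => Q t i j) (Q' i j) s) (i j : Fin d) :
    HasDerivAt (fun t => ((P t)ᵀ * Q t) i j) ((P'ᵀ * Q s + (P s)ᵀ * Q') i j) s := by
  have e : (fun t => ((P t)ᵀ * Q t) i j) = fun t => ∑ k, P t k i * Q t k j := by
    funext t; simp [Matrix.mul_apply]
  rw [e]
  have h := HasDerivAt.sum (u := Finset.univ)
    (A := fun k t => P t k i * Q t k j)
    (A' := fun k => P' k i * Q s k j + P s k i * Q' k j)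
    (fun k _ => (hP k i).mul (hQ k j))
  convert h using 1
  · rfl
  · funext t; simp [Finset.sum_apply]
  simp [Matrix.mul_apply, Matrix.add_apply, Finset.sum_add_distrib]

private lemma wronskian {d : ℕ} (Ac Bc Cc : ℝ → Matrix (Fin d) (Fin d) ℂ)
    (hAs : ∀ s, (Ac s)ᵀ = Ac s) (hCs : ∀ s, (Cc s)ᵀ = Cc s)
    (Y₁ N₁ Y₂ N₂ : ℝ → Matrix (Fin d) (Fin d) ℂ)
    (h1 : ∀ s i j, HasDerivAt (fun t => Y₁ t i j) ((Bc s * Y₁ s + Cc s * N₁ s) i j) s)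
    (h1' : ∀ s i j, HasDerivAt (fun t => N₁ t i j) ((-(Ac s * Y₁ s) - (Bc s)ᵀ * N₁ s) i j) s)
    (h2 : ∀ s i j, HasDerivAt (fun t => Y₂ t i j) ((Bc s * Y₂ s + Cc s * N₂ s) i j) s)
    (h2' : ∀ s i j, HasDerivAt (fun t => N₂ t i j) ((-(Ac s * Y₂ s) - (Bc s)ᵀ * N₂ s) i j) s) :
    ∀ s, (Y₁ s)ᵀ * N₂ s - (N₁ s)ᵀ * Y₂ s = (Y₁ 0)ᵀ * N₂ 0 - (N₁ 0)ᵀ * Y₂ 0 := by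
  intro s
  have key : ∀ i j, ∀ t : ℝ,
      HasDerivAt (fun u => ((Y₁ u)ᵀ * N₂ u - (N₁ u)ᵀ * Y₂ u) i j) 0 t := by
    intro i j t
    have hA := entry_deriv_mulT Y₁ N₂ (Bc t * Y₁ t + Cc t * N₁ t)
      (-(Ac t * Y₂ t) - (Bc t)ᵀ * N₂ t) t (h1 t) (h2' t) i j
    have hB := entry_deriv_mulT N₁ Y₂ (-(Ac t * Y₁ t) - (Bc t)ᵀ * N₁ t)
      (Bc t * Y₂ t + Cc t * N₂ t) t (h1' t) (h2 t) i j
    have hD := hA.sub hB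
    have e : (fun u => ((Y₁ u)ᵀ * N₂ u - (N₁ u)ᵀ * Y₂ u) i j)
        = fun u => ((Y₁ u)ᵀ * N₂ u) i j - ((N₁ u)ᵀ * Y₂ u) i j := by
      funext u; simp [Matrix.sub_apply]
    rw [e]
    convert hD using 1
    · rfl
    · rfl
    have alg : ((Bc t * Y₁ t + Cc t * N₁ t)ᵀ * N₂ t + (Y₁ t)ᵀ * (-(Ac t * Y₂ t) - (Bc t)ᵀ * N₂ t))
        - ((-(Ac t * Y₁ t) - (Bc t)ᵀ * N₁ t)ᵀ * Y₂ t + (N₁ t)ᵀ * (Bc t * Y₂ t + Cc t * N₂ t)) = 0 := by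
      simp only [Matrix.transpose_add, Matrix.transpose_sub, Matrix.transpose_neg,
        Matrix.transpose_mul, Matrix.transpose_transpose, hAs t, hCs t]
      noncomm_ring
    have h0 := congrFun (congrFun alg i) j
    simp only [Matrix.sub_apply, Matrix.add_apply, Matrix.zero_apply] at h0 ⊢
    exact h0.symm
  ext i j
  exact aux_const (f := fun u => ((Y₁ u)ᵀ * N₂ u - (N₁ u)ᵀ * Y₂ u) i j) (fun t => key i j t) s

private lemma qf1 {d : ℕ} (P : Matrix (Fin d) (Fin d) ℂ) (v : Fin d → ℂ) :
    star v ⬝ᵥ (P - P.map (starRingEnd ℂ)) *ᵥ v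
      = (2 * Complex.I) * (star v ⬝ᵥ ((P.map Complex.im).map Complex.ofReal) *ᵥ v) := by
  simp only [dotProduct, Matrix.mulVec, Matrix.sub_apply, Matrix.map_apply,
    Finset.mul_sum]
  refine Finset.sum_congr rfl fun i _ => ?_
  refine Finset.sum_congr rfl fun j _ => ?_
  have : P i j - (starRingEnd ℂ) (P i j) = (2 * Complex.I) * ((P i j).im : ℂ) := by
    rw [Complex.sub_conj]; push_cast; ring
  rw [this]; ring

private lemma qf2 {d : ℕ} (P : Matrix (Fin d) (Fin d) ℂ) (v : Fin d → ℂ) :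
    (starRingEnd ℂ) (star v ⬝ᵥ P *ᵥ v) = star v ⬝ᵥ ((P.map (starRingEnd ℂ))ᵀ) *ᵥ v := by
  simp only [dotProduct, Matrix.mulVec, Matrix.transpose_apply, Matrix.map_apply,
    map_sum, _root_.map_mul, Pi.star_apply, Complex.conj_conj, Finset.mul_sum]
  rw [Finset.sum_comm]
  refine Finset.sum_congr rfl fun i _ => Finset.sum_congr rfl fun j _ => ?_
  simp only [Complex.star_def, Complex.conj_conj]; ring

private lemma qf3 {d : ℕ} (P : Matrix (Fin d) (Fin d) ℂ) (z : Fin d → ℂ) :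
    star (P *ᵥ z) = (P.map (starRingEnd ℂ)) *ᵥ (star z) := by
  funext i
  simp [Matrix.mulVec, dotProduct, star_sum]

private lemma qf4 {d : ℕ} (A : Matrix (Fin d) (Fin d) ℂ) (x w : Fin d → ℂ) :
    (A *ᵥ x) ⬝ᵥ w = x ⬝ᵥ Aᵀ *ᵥ w := by
  rw [Matrix.dotProduct_mulVec, Matrix.vecMul_transpose]

private lemma qf5 {d : ℕ} (w : Fin d → ℂ) (h : star w ⬝ᵥ w = 0) : w = 0 := by
  have h2 : ∑ i, Complex.normSq (w i) = 0 := by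
    have h1 : ((∑ i, Complex.normSq (w i) : ℝ) : ℂ) = 0 := by
      rw [← h]
      simp only [dotProduct, Pi.star_apply, Complex.star_def, Complex.ofReal_sum]
      exact Finset.sum_congr rfl fun i _ => by
        rw [mul_comm, Complex.mul_conj]
    exact_mod_cast h1
  have h3 : ∀ i ∈ Finset.univ, Complex.normSq (w i) = 0 :=
    (Finset.sum_eq_zero_iff_of_nonneg (fun i _ => Complex.normSq_nonneg (w i))).1 h2
  funext i
  exact Complex.normSq_eq_zero.1 (h3 i (Finset.mem_univ i))

set_option maxHeartbeats 1000000 in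
theorem stmt_11 (d : ℕ) (hd : 1 ≤ d)
    (A B C : ℝ → Matrix (Fin d) (Fin d) ℝ)
    (hA : Continuous A) (hB : Continuous B) (hC : Continuous C)
    (hAsymm : ∀ s, (A s)ᵀ = A s) (hCsymm : ∀ s, (C s)ᵀ = C s)
    (Y N : ℝ → Matrix (Fin d) (Fin d) ℂ)
    (hY : ∀ s, ∀ i j, HasDerivAt (fun s => Y s i j)
      ((((B s).map (Complex.ofReal)) * Y s + ((C s).map (Complex.ofReal)) * N s) i j) s)
    (hN : ∀ s, ∀ i j, HasDerivAt (fun s => N s i j)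
      ((-(((A s).map (Complex.ofReal)) * Y s)
        - (((B s).map (Complex.ofReal))ᵀ) * N s) i j) s)
    (M₀ : Matrix (Fin d) (Fin d) ℂ)
    (hY0 : Y 0 = 1) (hN0 : N 0 = M₀)
    (hM₀symm : M₀ᵀ = M₀)
    (hIm : ∀ v : Fin d → ℂ,
      0 ≤ (star v ⬝ᵥ (((M₀.map Complex.im).map (Complex.ofReal)).mulVec v)).re ∧
      (star v ⬝ᵥ (((M₀.map Complex.im).map (Complex.ofReal)).mulVec v)).im = 0)
    (w₀ : Fin d → ℝ) (hw₀ : w₀ ≠ 0)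
    (hker : {v : Fin d → ℂ |
        star v ⬝ᵥ (((M₀.map Complex.im).map (Complex.ofReal)).mulVec v) = 0}
      = {v : Fin d → ℂ | ∃ c : ℂ, v = c • fun i => (w₀ i : ℂ)})
    (hM₀w₀ : ∀ i, ((M₀.mulVec fun i => (w₀ i : ℂ)) i).im = 0)
    (hYw : ∀ s : ℝ, (Y s).mulVec (fun i => (w₀ i : ℂ)) ≠ 0) :
    ∀ s : ℝ, ∀ y : Fin d → ℂ, y ≠ 0 →
      star y ⬝ᵥ ((Y s).mulVec fun i => (w₀ i : ℂ)) = 0 →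
      0 < (star y ⬝ᵥ
        ((((N s * (Y s)⁻¹).map Complex.im).map (Complex.ofReal)).mulVec y)).re := by
  classical
  set Ac : ℝ → Matrix (Fin d) (Fin d) ℂ := fun s => (A s).map Complex.ofReal with hAc
  set Bc : ℝ → Matrix (Fin d) (Fin d) ℂ := fun s => (B s).map Complex.ofReal with hBc
  set Cc : ℝ → Matrix (Fin d) (Fin d) ℂ := fun s => (C s).map Complex.ofReal with hCc
  have hAcs : ∀ s, (Ac s)ᵀ = Ac s := by
    intro s; rw [hAc]; simp only; rw [← Matrix.transpose_map, hAsymm]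
  have hCcs : ∀ s, (Cc s)ᵀ = Cc s := by
    intro s; rw [hCc]; simp only; rw [← Matrix.transpose_map, hCsymm]
  set Yb : ℝ → Matrix (Fin d) (Fin d) ℂ := fun s => (Y s).map (starRingEnd ℂ) with hYb
  set Nb : ℝ → Matrix (Fin d) (Fin d) ℂ := fun s => (N s).map (starRingEnd ℂ) with hNb
  -- derivatives of conjugated solutions
  have hYbD : ∀ s i j, HasDerivAt (fun t => Yb t i j) ((Bc s * Yb s + Cc s * Nb s) i j) s := by
    intro s i j
    have h := (hY s i j).star
    have e1 : (fun t => star (Y t i j)) = fun t => Yb t i j := by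
      funext t; simp [hYb, Matrix.map_apply, Complex.star_def]
    have e2 : star ((Bc s * Y s + Cc s * N s) i j) = (Bc s * Yb s + Cc s * Nb s) i j := by
      simp only [hBc, hCc, hYb, hNb, Matrix.add_apply, Matrix.mul_apply, Matrix.map_apply,
        star_add, star_sum, star_mul', Complex.star_def, Complex.conj_ofReal]
    rw [e1, e2] at h; exact h
  have hNbD : ∀ s i j, HasDerivAt (fun t => Nb t i j) ((-(Ac s * Yb s) - (Bc s)ᵀ * Nb s) i j) s := by
    intro s i j
    have h := (hN s i j).star
    have e1 : (fun t => star (N t i j)) = fun t => Nb t i j := by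
      funext t; simp [hNb, Matrix.map_apply, Complex.star_def]
    have e2 : star ((-(Ac s * Y s) - (Bc s)ᵀ * N s) i j)
        = (-(Ac s * Yb s) - (Bc s)ᵀ * Nb s) i j := by
      simp only [hAc, hBc, hYb, hNb, Matrix.sub_apply, Matrix.neg_apply, Matrix.mul_apply,
        Matrix.transpose_apply, Matrix.map_apply, star_sub, star_neg, star_sum, star_mul',
        Complex.star_def, Complex.conj_ofReal]
    rw [e1, e2] at h; exact h
  -- the two Wronskian identities
  have hG : ∀ s, (Y s)ᵀ * N s - (N s)ᵀ * Y s = 0 := by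
    have h := wronskian Ac Bc Cc hAcs hCcs Y N Y N hY hN hY hN
    intro s
    rw [h s, hY0, hN0, Matrix.transpose_one, Matrix.one_mul, hM₀symm, Matrix.mul_one, sub_self]
  have hF : ∀ s, (Yb s)ᵀ * N s - (Nb s)ᵀ * Y s = M₀ - M₀.map (starRingEnd ℂ) := by
    have h := wronskian Ac Bc Cc hAcs hCcs Yb Nb Y N hYbD hNbD hY hN
    intro s
    rw [h s]
    have e1 : Yb 0 = 1 := by
      rw [hYb]; simp only; rw [hY0]; ext i j
      simp [Matrix.one_apply, Matrix.map_apply, apply_ite (starRingEnd ℂ)]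
    have e2 : Nb 0 = M₀.map (starRingEnd ℂ) := by rw [hNb]; simp only; rw [hN0]
    rw [e1, e2, hY0, hN0, Matrix.transpose_one, Matrix.one_mul, Matrix.mul_one,
      ← Matrix.transpose_map, hM₀symm]
  -- invertibility of Y s
  have hdet : ∀ s, IsUnit (Y s).det := by
    intro s
    rw [isUnit_iff_ne_zero]
    intro h0
    obtain ⟨v, hv0, hv⟩ := (Matrix.exists_mulVec_eq_zero_iff).2 h0
    have key : star v ⬝ᵥ (M₀ - M₀.map (starRingEnd ℂ)) *ᵥ v = 0 := by
      rw [← hF s, Matrix.sub_mulVec, dotProduct_sub]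
      have t1 : star v ⬝ᵥ ((Yb s)ᵀ * N s) *ᵥ v = 0 := by
        rw [← Matrix.mulVec_mulVec, ← qf4, hYb]
        simp only
        rw [← qf3, hv]
        simp
      have t2 : star v ⬝ᵥ ((Nb s)ᵀ * Y s) *ᵥ v = 0 := by
        rw [← Matrix.mulVec_mulVec, ← qf4, hv]
        simp
      rw [t1, t2, sub_zero]
    rw [qf1] at key
    have hQ : star v ⬝ᵥ ((M₀.map Complex.im).map Complex.ofReal) *ᵥ v = 0 := by
      have h2I : (2 * Complex.I) ≠ 0 := by simp [Complex.I_ne_zero]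
      exact (mul_eq_zero.1 key).resolve_left h2I
    have hvmem : v ∈ {v : Fin d → ℂ |
        star v ⬝ᵥ (((M₀.map Complex.im).map (Complex.ofReal)).mulVec v) = 0} := hQ
    rw [hker] at hvmem
    obtain ⟨c, hc⟩ := hvmem
    have hcne : c ≠ 0 := by
      intro h; rw [h, zero_smul] at hc; exact hv0 hc
    apply hYw s
    have hv2 : (Y s) *ᵥ (c • fun i => (w₀ i : ℂ)) = 0 := by rw [← hc]; exact hv
    rw [Matrix.mulVec_smul] at hv2
    exact (smul_eq_zero.1 hv2).resolve_left hcne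
  -- main argument
  intro s y hy hyo
  set Ys := Y s with hYs
  set Ns := N s with hNs
  set Yi := Ys⁻¹ with hYi
  have hYsYi : Ys * Yi = 1 := Matrix.mul_nonsing_inv _ (hdet s)
  have hYiYs : Yi * Ys = 1 := Matrix.nonsing_inv_mul _ (hdet s)
  set z := Yi *ᵥ y with hz
  have hyz : Ys *ᵥ z = y := by rw [hz, Matrix.mulVec_mulVec, hYsYi, Matrix.one_mulVec]
  set M := Ns * Yi with hM
  -- symmetry of M
  have hGs : Ysᵀ * Ns = Nsᵀ * Ys := sub_eq_zero.1 (hG s)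
  have hMsym : Mᵀ = M := by
    rw [hM, Matrix.transpose_mul]
    calc Yiᵀ * Nsᵀ = Yiᵀ * Nsᵀ * (Ys * Yi) := by rw [hYsYi, Matrix.mul_one]
      _ = Yiᵀ * (Nsᵀ * Ys) * Yi := by noncomm_ring
      _ = Yiᵀ * (Ysᵀ * Ns) * Yi := by rw [hGs]
      _ = (Ys * Yi)ᵀ * Ns * Yi := by rw [Matrix.transpose_mul]; noncomm_ring
      _ = Ns * Yi := by rw [hYsYi, Matrix.transpose_one, Matrix.one_mul]
  have ha : star y ⬝ᵥ M *ᵥ y = star z ⬝ᵥ ((Yb s)ᵀ * Ns) *ᵥ z := by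
    conv_lhs => rw [← hyz]
    have e1 : M *ᵥ (Ys *ᵥ z) = Ns *ᵥ z := by
      rw [Matrix.mulVec_mulVec, hM, Matrix.mul_assoc, hYiYs, Matrix.mul_one]
    rw [e1, hYs, qf3, qf4, Matrix.mulVec_mulVec]
  have eM : ((((Yb s)ᵀ * Ns).map (starRingEnd ℂ))ᵀ) = (Nb s)ᵀ * Ys := by
    ext i j
    simp only [hYb, hNb, hNs, hYs, Matrix.transpose_apply, Matrix.map_apply, Matrix.mul_apply,
      map_sum, _root_.map_mul, Complex.conj_conj]
    exact Finset.sum_congr rfl fun k _ => by ring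
  have hconj_a : (starRingEnd ℂ) (star y ⬝ᵥ M *ᵥ y) = star z ⬝ᵥ ((Nb s)ᵀ * Ys) *ᵥ z := by
    rw [ha, qf2, eM]
  have key : star y ⬝ᵥ (M - M.map (starRingEnd ℂ)) *ᵥ y
      = star z ⬝ᵥ (M₀ - M₀.map (starRingEnd ℂ)) *ᵥ z := by
    have lhs : star y ⬝ᵥ (M - M.map (starRingEnd ℂ)) *ᵥ y
        = (star y ⬝ᵥ M *ᵥ y) - (starRingEnd ℂ) (star y ⬝ᵥ M *ᵥ y) := by
      rw [Matrix.sub_mulVec, dotProduct_sub]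
      congr 1
      rw [qf2, ← Matrix.transpose_map, hMsym]
    have rhs : (star y ⬝ᵥ M *ᵥ y) - (starRingEnd ℂ) (star y ⬝ᵥ M *ᵥ y)
        = star z ⬝ᵥ (M₀ - M₀.map (starRingEnd ℂ)) *ᵥ z := by
      rw [hconj_a, ha, ← dotProduct_sub, ← Matrix.sub_mulVec, hNs, hYs, hF s]
    rw [lhs, rhs]
  rw [qf1, qf1] at key
  have h2I : (2 * Complex.I) ≠ 0 := by simp [Complex.I_ne_zero]
  have hQeq : star y ⬝ᵥ ((M.map Complex.im).map Complex.ofReal) *ᵥ y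
      = star z ⬝ᵥ ((M₀.map Complex.im).map Complex.ofReal) *ᵥ z :=
    mul_left_cancel₀ h2I key
  obtain ⟨hre, him⟩ := hIm z
  rw [hQeq]
  rcases lt_or_eq_of_le hre with h | h
  · exact h
  · exfalso
    have hQ0 : star z ⬝ᵥ ((M₀.map Complex.im).map Complex.ofReal) *ᵥ z = 0 := by
      apply Complex.ext
      · rw [Complex.zero_re]; exact h.symm
      · rw [Complex.zero_im]; exact him
    have hzmem : z ∈ {v : Fin d → ℂ |
        star v ⬝ᵥ (((M₀.map Complex.im).map (Complex.ofReal)).mulVec v) = 0} := hQ0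
    rw [hker] at hzmem
    obtain ⟨c, hc⟩ := hzmem
    have hzne : z ≠ 0 := by
      intro h0
      apply hy
      rw [← hyz, h0, Matrix.mulVec_zero]
    have hcne : c ≠ 0 := by
      intro h0; rw [h0, zero_smul] at hc; exact hzne hc
    have hyw : y = c • (Ys *ᵥ fun i => (w₀ i : ℂ)) := by
      rw [← hyz, hc, Matrix.mulVec_smul]
    have hw0 : (Ys *ᵥ fun i => (w₀ i : ℂ)) = 0 := by
      have hd0 : star y ⬝ᵥ (Ys *ᵥ fun i => (w₀ i : ℂ)) = 0 := hyo
      rw [hyw, star_smul, smul_dotProduct, smul_eq_mul] at hd0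
      have hcs : (star c) ≠ 0 := star_ne_zero.2 hcne
      have hd1 := (mul_eq_zero.1 hd0).resolve_left hcs
      exact qf5 _ hd1
    exact hYw s hw0
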